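/- In the polynomial ring 𝔽₂[x₁,…,x₅], let y_i(x) = Σ_{j=1}^{5} 𝓡_{ij} x_j (entries of 𝓡 reduced mod 2), and set c₁ = x₂x₄x₅ + x₂x₃x₅ + x₁x₃x₅ + x₁x₃x₄ + x₁x₂x₄ and c₂ = x₄x₅² + x₃x₅² + x₁x₅² + x₃²x₄ + x₂²x₄ + x₃³ + x₁x₃² + x₂²x₃ + x₁x₂². Then for every pair (α,β) ∈ 𝔽₂ × 𝔽₂ with (α,β) ≠ (0,0) and every homogeneous polynomial P(X,Y) of degree 3 in 𝔽₂[X,Y], the polynomial α·c₁ + β·c₂ + Σ_{i=1}^{5} P(x_i, y_i(x)) is nonzero in 𝔽₂[x₁,…,x₅]. (Hence the cohomology classes of the hexagon 4-cocycles bde+bce+ace+acd+abd and de²+ce²+ae²+c²d+b²d+c³+ac²+b²c+ab² are linearly independent, so dim H⁴_{2,3} ≥ 2.) -/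

import Mathlib

open MvPolynomial

/-- The 5×5 integer matrix 𝓡. -/
def Rmat : Matrix (Fin 5) (Fin 5) ℤ :=
  !![0, -2, 1, 1, -2;
     0, -1, 0, 1, -1;
     -1, 2, -2, 0, 1;
     -1, 3, -2, -1, 2;
     0, 1, -1, 0, 0]

/-- y_i(x) = Σ_j 𝓡_{ij} x_j in 𝔽_p[x₁,…,x₅] (variables indexed by `Fin 5`). -/
noncomputable def yPoly (p : ℕ) (i : Fin 5) : MvPolynomial (Fin 5) (ZMod p) :=
  ∑ j : Fin 5, C ((Rmat i j : ℤ) : ZMod p) * X j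

/-- c₁ = x₂x₄x₅ + x₂x₃x₅ + x₁x₃x₅ + x₁x₃x₄ + x₁x₂x₄ (0-indexed variables). -/
noncomputable def coc1 : MvPolynomial (Fin 5) (ZMod 2) :=
  X 1 * X 3 * X 4 + X 1 * X 2 * X 4 + X 0 * X 2 * X 4 + X 0 * X 2 * X 3 + X 0 * X 1 * X 3

/-- c₂ = x₄x₅² + x₃x₅² + x₁x₅² + x₃²x₄ + x₂²x₄ + x₃³ + x₁x₃² + x₂²x₃ + x₁x₂²
(0-indexed variables). -/
noncomputable def coc2 : MvPolynomial (Fin 5) (ZMod 2) :=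
  X 3 * X 4 ^ 2 + X 2 * X 4 ^ 2 + X 0 * X 4 ^ 2 + X 2 ^ 2 * X 3 + X 1 ^ 2 * X 3
    + X 2 ^ 3 + X 0 * X 2 ^ 2 + X 1 ^ 2 * X 2 + X 0 * X 1 ^ 2

/- Auxiliary lemmas -/

lemma f3' : ((3 : Fin 5) : ℕ) = 3 := rfl
lemma f4' : ((4 : Fin 5) : ℕ) = 4 := rfl
lemma p2' : (2 : Polynomial (ZMod 2)) = 0 := CharTwo.two_eq_zero
lemma p3' : (3 : Polynomial (ZMod 2)) = 1 := by
  rw [show (3 : Polynomial (ZMod 2)) = 2 + 1 by norm_num, p2', zero_add]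
lemma p4' : (4 : Polynomial (ZMod 2)) = 0 := by
  rw [show (4 : Polynomial (ZMod 2)) = 2 * 2 by norm_num, p2', mul_zero]
lemma p6' : (6 : Polynomial (ZMod 2)) = 0 := by
  rw [show (6 : Polynomial (ZMod 2)) = 2 * 3 by norm_num, p2', zero_mul]
lemma mv2' : (2 : MvPolynomial (Fin 5) (ZMod 2)) = 0 := CharTwo.two_eq_zero
lemma mv3' : (3 : MvPolynomial (Fin 5) (ZMod 2)) = 1 := by
  rw [show (3 : MvPolynomial (Fin 5) (ZMod 2)) = 2 + 1 by norm_num, mv2', zero_add]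

lemma ypoly0 : yPoly 2 0 = X 2 + X 3 := by
  simp [yPoly, Fin.sum_univ_five, Rmat, CharTwo.neg_eq, mv2', mv3']
lemma ypoly1 : yPoly 2 1 = X 1 + X 3 + X 4 := by
  simp [yPoly, Fin.sum_univ_five, Rmat, CharTwo.neg_eq, mv2', mv3']
lemma ypoly2 : yPoly 2 2 = X 0 + X 4 := by
  simp [yPoly, Fin.sum_univ_five, Rmat, CharTwo.neg_eq, mv2', mv3']
lemma ypoly3 : yPoly 2 3 = X 0 + X 1 + X 3 := by
  simp [yPoly, Fin.sum_univ_five, Rmat, CharTwo.neg_eq, mv2', mv3']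
lemma ypoly4 : yPoly 2 4 = X 1 + X 2 := by
  simp [yPoly, Fin.sum_univ_five, Rmat, CharTwo.neg_eq, mv2', mv3']

lemma fin2_finsupp_eq (m : Fin 2 →₀ ℕ) :
    m = Finsupp.single 0 (m 0) + Finsupp.single 1 (m 1) := by
  ext i; fin_cases i <;> simp [Finsupp.single_apply]

lemma fin2_degree (m : Fin 2 →₀ ℕ) : Finsupp.degree m = m 0 + m 1 := by
  rw [Finsupp.degree_apply, Finset.sum_subset (Finset.subset_univ m.support)
    (by intro x _ hx; exact Finsupp.notMem_support_iff.mp hx), Fin.sum_univ_two]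

lemma homog_decomp (P : MvPolynomial (Fin 2) (ZMod 2)) (hP : P.IsHomogeneous 3) :
    P = C (coeff (Finsupp.single 0 3) P) * X 0 ^ 3
      + C (coeff (Finsupp.single 0 2 + Finsupp.single 1 1) P) * (X 0 ^ 2 * X 1)
      + C (coeff (Finsupp.single 0 1 + Finsupp.single 1 2) P) * (X 0 * X 1 ^ 2)
      + C (coeff (Finsupp.single 1 3) P) * X 1 ^ 3 := by
  apply MvPolynomial.ext
  intro m
  have hm := fin2_finsupp_eq m
  by_cases hd : m 0 + m 1 = 3
  · rw [hm]
    have h0 : m 0 ≤ 3 := by omega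
    interval_cases h : (m 0) <;>
      · have h1 : m 1 = 3 - m 0 := by omega
        rw [h1, h]
        norm_num
        simp [coeff_add, coeff_C_mul, X_pow_eq_monomial, X,
          monomial_mul, monomial_pow, Finsupp.smul_single, smul_eq_mul,
          coeff_monomial, Finsupp.ext_iff, Fin.forall_fin_two,
          Finsupp.single_apply, Finsupp.add_apply]
  · rw [hP.coeff_eq_zero (by rw [fin2_degree]; exact hd)]
    rw [hm]
    simp [coeff_add, coeff_C_mul, X_pow_eq_monomial, X,
      monomial_mul, monomial_pow, Finsupp.smul_single, smul_eq_mul,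
      coeff_monomial, Finsupp.ext_iff, Fin.forall_fin_two,
      Finsupp.single_apply, Finsupp.add_apply]
    rw [if_neg (by omega), if_neg (by omega), if_neg (by omega), if_neg (by omega)]
    simp

set_option maxHeartbeats 2000000 in
/-- in 𝔽₂[x₁,…,x₅], for every (α,β) ≠ (0,0) and every homogeneous polynomial
P(X,Y) of degree 3, the polynomial α·c₁ + β·c₂ + Σ_{i=1}^{5} P(x_i, y_i(x)) is nonzero;
hence the classes of the hexagon 4-cocycles c₁ and c₂ are linearly independent and
dim H⁴_{2,3} ≥ 2. -/
theorem statement18 (α β : ZMod 2) (h : ¬(α = 0 ∧ β = 0))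
    (P : MvPolynomial (Fin 2) (ZMod 2)) (hP : P.IsHomogeneous 3) :
    C α * coc1 + C β * coc2 +
      ∑ i : Fin 5, aeval ![X i, yPoly 2 i] P ≠ 0 := by
  intro hT
  have hdec := homog_decomp P hP
  set a := coeff (Finsupp.single 0 3) P
  set b := coeff (Finsupp.single 0 2 + Finsupp.single 1 1) P
  set c := coeff (Finsupp.single 0 1 + Finsupp.single 1 2) P
  set d := coeff (Finsupp.single 1 3) P
  rw [hdec] at hT
  simp only [Fin.sum_univ_five, map_add, map_mul, map_pow, aeval_X, aeval_C,
    Matrix.cons_val_zero, Matrix.cons_val_one, Matrix.head_cons,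
    MvPolynomial.algebraMap_eq, ypoly0, ypoly1, ypoly2, ypoly3, ypoly4] at hT
  have hA := congrArg
    (aeval (fun i : Fin 5 => (Polynomial.X : Polynomial (ZMod 2)) ^ (4 ^ (i : ℕ)))) hT
  simp only [coc1, coc2, map_add, map_mul, map_pow, aeval_X, aeval_C, map_zero,
    Polynomial.algebraMap_eq] at hA
  norm_num [f3', f4'] at hA
  ring_nf at hA
  simp only [p2', p3', p4', p6', mul_zero, zero_mul, mul_one, add_zero, zero_add] at hA
  have h1 := congrArg (fun q => Polynomial.coeff q 768) hA
  have h2 := congrArg (fun q => Polynomial.coeff q 48) hA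
  have h3 := congrArg (fun q => Polynomial.coeff q 324) hA
  norm_num [Polynomial.coeff_add, Polynomial.coeff_mul_C, Polynomial.coeff_X_pow] at h1 h2 h3
  rw [h1, add_zero] at h2
  exact h ⟨h3, h2⟩
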